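/- Let φ ∈ Aut(𝔸²) and p ∈ k̄² be such that the Zariski closure Δ̄ of O_φ(p) is infinite and not all of k̄² (i.e. Δ̄ is a curve), and let ℓ be the number of irreducible components of Δ̄. Then the irreducible components of Δ̄ can be labeled C₁, …, C_ℓ with p ∈ C₁ so that φ(C_i) = C_{i+1} for 1 ≤ i < ℓ and φ(C_ℓ) = C₁, and moreover C_i equals the Zariski closure of O_{φ^ℓ}(φ^{i−1}(p)) for each i = 1, …, ℓ. Furthermore, the number of irreducible components of Δ̂ — the zero locus in k̄² of the ideal I_k(O_φ(p)) of k-polynomials vanishing on O_φ(p) — is a multiple of ℓ, and every irreducible component of Δ̂ is the image of some C_i under the coordinatewise action of an element of Gal(k̄/k). -/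

import Mathlib

open MvPolynomial

noncomputable section

/-- Points of the affine plane over the algebraic closure of `k`. -/
abbrev Pt (k : Type*) [Field k] : Type _ := Fin 2 → AlgebraicClosure k

/-- Plane automorphisms over `k`, modeled as `k`-algebra automorphisms of `k[x,y]`. -/
abbrev PlaneAut (k : Type*) [Field k] : Type _ :=
  MvPolynomial (Fin 2) k ≃ₐ[k] MvPolynomial (Fin 2) k

/-- The embedding of `k` in its algebraic closure. -/
abbrev emb (k : Type*) [Field k] : k →+* AlgebraicClosure k :=
  algebraMap k (AlgebraicClosure k)

variable {k : Type*} [Field k]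

/-- The action of a plane automorphism on the points of the plane over `k̄`:
the point map of `φ` is `q ↦ (f(q), g(q))` where `f = φ.symm X₀`, `g = φ.symm X₁`
(so that `actp` is a left action of the automorphism group on points). -/
def actp (φ : PlaneAut k) (q : Pt k) : Pt k :=
  fun i => aeval q (φ.symm (X i))

/-- The Zariski closure of a set of points of `k̄²`: the zero locus of the ideal of all
polynomials with coefficients in `k̄` vanishing on it. -/
def zclos (Δ : Set (Pt k)) : Set (Pt k) :=
  zeroLocus (AlgebraicClosure k) (vanishingIdeal (k := AlgebraicClosure k) Δ)

/-- `Δ̂` : the zero locus in `k̄²` of the ideal `I_k(Δ)` of all polynomials with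
coefficients in `k` vanishing on `Δ`. -/
def hatSet (Δ : Set (Pt k)) : Set (Pt k) :=
  {q | ∀ P : MvPolynomial (Fin 2) k, (∀ x ∈ Δ, aeval x P = 0) → aeval q P = 0}

/-- Coordinatewise action of the Galois group `Gal(k̄/k)` on points of `k̄²`. -/
def galAct (g : AlgebraicClosure k ≃ₐ[k] AlgebraicClosure k) (q : Pt k) : Pt k :=
  fun i => g (q i)

/-- A subset of `k̄²` is Zariski closed iff it is the zero locus of an ideal of `k̄[x,y]`. -/
def IsZClosed (S : Set (Pt k)) : Prop :=
  ∃ I : Ideal (MvPolynomial (Fin 2) (AlgebraicClosure k)), S = zeroLocus (AlgebraicClosure k) I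

/-- Irreducibility with respect to the Zariski topology on `k̄²`. -/
def IsZIrreducible (S : Set (Pt k)) : Prop :=
  S.Nonempty ∧ ∀ Z₁ Z₂ : Set (Pt k), IsZClosed Z₁ → IsZClosed Z₂ → S ⊆ Z₁ ∪ Z₂ →
    (S ⊆ Z₁ ∨ S ⊆ Z₂)

/-- `C` is an irreducible component of `S` (for the Zariski topology on `k̄²`):
a maximal irreducible subset of `S`. -/
def IsIrredComponentOf (C S : Set (Pt k)) : Prop :=
  IsZIrreducible C ∧ C ⊆ S ∧ ∀ C' : Set (Pt k), IsZIrreducible C' → C' ⊆ S → C ⊆ C' → C = C'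

/-- The stabilizer `Aut(𝔸², Δ)` of a set of points of `k̄²`, as a set of plane automorphisms. -/
def stabSet (Δ : Set (Pt k)) : Set (PlaneAut k) :=
  {φ | actp φ '' Δ = Δ}

/-- The orbit `O_H(p)` of a point under a subgroup of plane automorphisms. -/
def orbSub (H : Subgroup (PlaneAut k)) (p : Pt k) : Set (Pt k) :=
  {q | ∃ h ∈ H, actp h p = q}

/-- The orbit `O_φ(p) = {φⁿ(p) : n ∈ ℤ}` of a point under a single plane automorphism. -/
def orbAut (φ : PlaneAut k) (p : Pt k) : Set (Pt k) :=
  {q | ∃ n : ℤ, actp (φ ^ n) p = q}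

/-- The degree of a plane automorphism: the maximum of the total degrees of the two
polynomials giving its point map. -/
def autDegree (φ : PlaneAut k) : ℕ :=
  max (φ.symm (X 0)).totalDegree (φ.symm (X 1)).totalDegree

/-- The torus `T = {(x,y) ↦ (t·x, t⁻¹·y) : t ∈ k*}`, as a set of plane automorphisms. -/
def torusT (k : Type*) [Field k] : Set (PlaneAut k) :=
  {φ | ∃ t : k, t ≠ 0 ∧ ∀ q : Pt k, actp φ q = ![emb k t * q 0, (emb k t)⁻¹ * q 1]}

end
noncomputable section Stmt15Aux
open MvPolynomial Ideal

variable {k : Type*} [Field k]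

lemma aeval_actp (ψ : PlaneAut k) (q : Pt k) (P : MvPolynomial (Fin 2) k) :
    aeval (actp ψ q) P = aeval q (ψ.symm P) := by
  have h : (aeval (actp ψ q) : MvPolynomial (Fin 2) k →ₐ[k] AlgebraicClosure k)
      = (aeval q).comp ψ.symm.toAlgHom := by
    apply MvPolynomial.algHom_ext
    intro i
    simp [actp]
  exact DFunLike.congr_fun h P

lemma actp_one (q : Pt k) : actp (1 : PlaneAut k) q = q := by
  funext i
  have h : (1 : PlaneAut k).symm = 1 := rfl
  simp [actp, h]

lemma actp_mul (a b : PlaneAut k) (q : Pt k) : actp (a * b) q = actp a (actp b q) := by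
  funext i
  have h : (a * b).symm (X i) = b.symm (a.symm (X i)) := rfl
  rw [actp, h, ← aeval_actp]
  rfl

instance : SMul (PlaneAut k) (Pt k) := ⟨actp⟩

lemma actp_smul_def (φ : PlaneAut k) (q : Pt k) : φ • q = actp φ q := rfl

instance : MulAction (PlaneAut k) (Pt k) where
  one_smul := actp_one
  mul_smul := actp_mul

lemma isZClosed_zclos (Δ : Set (Pt k)) : IsZClosed (zclos Δ) := ⟨_, rfl⟩

lemma subset_zclos (Δ : Set (Pt k)) : Δ ⊆ zclos Δ :=
  zeroLocus_vanishingIdeal_le Δ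

lemma zclos_min {Δ Z : Set (Pt k)} (h : Δ ⊆ Z) (hZ : IsZClosed Z) : zclos Δ ⊆ Z := by
  obtain ⟨I, rfl⟩ := hZ
  apply zeroLocus_anti_mono
  intro f hf x hx
  exact (h hx) f hf

lemma zclos_eq_self {Z : Set (Pt k)} (hZ : IsZClosed Z) : zclos Z = Z :=
  subset_antisymm (zclos_min le_rfl hZ) (subset_zclos Z)

lemma zclos_mono {A B : Set (Pt k)} (h : A ⊆ B) : zclos A ⊆ zclos B :=
  zclos_min (h.trans (subset_zclos B)) (isZClosed_zclos B)

lemma IsZClosed.union {Z₁ Z₂ : Set (Pt k)} (h1 : IsZClosed Z₁) (h2 : IsZClosed Z₂) :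
    IsZClosed (Z₁ ∪ Z₂) := by
  obtain ⟨I, rfl⟩ := h1
  obtain ⟨J, rfl⟩ := h2
  refine ⟨I ⊓ J, Set.eq_of_subset_of_subset ?_ ?_⟩
  · rintro q (hq | hq) f hf
    · exact hq f hf.1
    · exact hq f hf.2
  · intro q hq
    by_contra hc
    simp only [Set.mem_union, not_or] at hc
    obtain ⟨hc1, hc2⟩ := hc
    rw [mem_zeroLocus_iff] at hc1 hc2
    push_neg at hc1 hc2
    obtain ⟨f, hf, hfq⟩ := hc1
    obtain ⟨g, hg, hgq⟩ := hc2
    have hm : f * g ∈ I ⊓ J := ⟨I.mul_mem_right g hf, J.mul_mem_left f hg⟩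
    have h0 := hq _ hm
    rw [_root_.map_mul] at h0
    rcases mul_eq_zero.mp h0 with h | h
    · exact hfq h
    · exact hgq h

lemma isZClosed_empty : IsZClosed (∅ : Set (Pt k)) :=
  ⟨⊤, by rw [zeroLocus_top]; rfl⟩

lemma isZClosed_biUnion {ι : Type*} (s : Finset ι) (Z : ι → Set (Pt k))
    (h : ∀ i ∈ s, IsZClosed (Z i)) : IsZClosed (⋃ i ∈ s, Z i) := by
  classical
  induction s using Finset.induction_on with
  | empty => simpa using isZClosed_empty
  | @insert a s ha ih =>
    rw [Finset.set_biUnion_insert]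
    exact (h _ (Finset.mem_insert_self _ _)).union
      (ih fun i hi => h i (Finset.mem_insert_of_mem hi))

lemma IsZIrreducible.subset_of_cover {ι : Type*} {C : Set (Pt k)} (hC : IsZIrreducible C)
    (s : Finset ι) (Z : ι → Set (Pt k)) (hZ : ∀ i ∈ s, IsZClosed (Z i))
    (hsub : C ⊆ ⋃ i ∈ s, Z i) : ∃ i ∈ s, C ⊆ Z i := by
  classical
  induction s using Finset.induction_on with
  | empty =>
    obtain ⟨x, hx⟩ := hC.1
    simpa using hsub hx
  | @insert a s ha ih =>
    rw [Finset.set_biUnion_insert] at hsub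
    rcases hC.2 _ _ (hZ _ (Finset.mem_insert_self _ _))
      (isZClosed_biUnion s Z fun i hi => hZ i (Finset.mem_insert_of_mem hi)) hsub with h | h
    · exact ⟨a, Finset.mem_insert_self _ _, h⟩
    · obtain ⟨i, hi, hCi⟩ := ih (fun i hi => hZ i (Finset.mem_insert_of_mem hi)) h
      exact ⟨i, Finset.mem_insert_of_mem hi, hCi⟩

lemma IsZIrreducible.zclos {C : Set (Pt k)} (h : IsZIrreducible C) : IsZIrreducible (zclos C) := by
  refine ⟨h.1.mono (subset_zclos C), fun Z₁ Z₂ h1 h2 hsub => ?_⟩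
  rcases h.2 Z₁ Z₂ h1 h2 ((subset_zclos C).trans hsub) with hc | hc
  · exact Or.inl (zclos_min hc h1)
  · exact Or.inr (zclos_min hc h2)

end Stmt15Aux
noncomputable section Stmt15Aux2
open MvPolynomial Ideal

variable {k : Type*} [Field k]

/-- Base change of a plane automorphism (inverse direction) to `k̄[x,y]`. -/
def liftA (φ : PlaneAut k) :
    MvPolynomial (Fin 2) (AlgebraicClosure k) →ₐ[AlgebraicClosure k]
      MvPolynomial (Fin 2) (AlgebraicClosure k) :=
  aeval (fun i => map (emb k) (φ.symm (X i)))

lemma eval_liftA (φ : PlaneAut k) (q : Pt k) (f : MvPolynomial (Fin 2) (AlgebraicClosure k)) :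
    eval (actp φ q) f = eval q (liftA φ f) := by
  have h : (eval (actp φ q) : MvPolynomial (Fin 2) (AlgebraicClosure k) →+* AlgebraicClosure k)
      = (eval q : MvPolynomial (Fin 2) (AlgebraicClosure k) →+* AlgebraicClosure k).comp
        (liftA φ).toRingHom := by
    apply MvPolynomial.ringHom_ext
    · intro r
      simp [liftA]
    · intro i
      simp [liftA, actp, eval_map, aeval_def]
  exact DFunLike.congr_fun h f

lemma actp_preimage_closed (φ : PlaneAut k) {Z : Set (Pt k)} (hZ : IsZClosed Z) :
    IsZClosed (actp φ ⁻¹' Z) := by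
  obtain ⟨I, rfl⟩ := hZ
  refine ⟨Ideal.span (⇑(liftA φ) '' I), ?_⟩
  rw [zeroLocus_span]
  ext q
  simp only [Set.mem_preimage, mem_zeroLocus_iff, Set.mem_setOf_eq, aeval_eq_eval]
  constructor
  · rintro h _ ⟨f, hf, rfl⟩
    rw [← eval_liftA]
    exact h f hf
  · intro h f hf
    rw [eval_liftA]
    exact h _ ⟨f, hf, rfl⟩

lemma eval_gmap (g : AlgebraicClosure k ≃ₐ[k] AlgebraicClosure k) (q : Pt k)
    (f : MvPolynomial (Fin 2) (AlgebraicClosure k)) :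
    eval (galAct g q) f = g (eval q (MvPolynomial.map g.symm.toAlgHom.toRingHom f)) := by
  have h : (eval (galAct g q) : MvPolynomial (Fin 2) (AlgebraicClosure k) →+* AlgebraicClosure k)
      = (g.toAlgHom.toRingHom.comp
          ((eval q : MvPolynomial (Fin 2) (AlgebraicClosure k) →+* AlgebraicClosure k).comp
            (MvPolynomial.map g.symm.toAlgHom.toRingHom))) := by
    apply MvPolynomial.ringHom_ext
    · intro r
      simp [galAct]
    · intro i
      simp [galAct]
  exact DFunLike.congr_fun h f

lemma galAct_preimage_closed (g : AlgebraicClosure k ≃ₐ[k] AlgebraicClosure k) {Z : Set (Pt k)}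
    (hZ : IsZClosed Z) : IsZClosed (galAct g ⁻¹' Z) := by
  obtain ⟨I, rfl⟩ := hZ
  refine ⟨Ideal.span (⇑(MvPolynomial.map g.symm.toAlgHom.toRingHom) '' I), ?_⟩
  rw [zeroLocus_span]
  ext q
  simp only [Set.mem_preimage, mem_zeroLocus_iff, Set.mem_setOf_eq, aeval_eq_eval]
  constructor
  · rintro h _ ⟨f, hf, rfl⟩
    have := h f hf
    rw [eval_gmap] at this
    exact (map_eq_zero_iff g g.injective).mp this
  · intro h f hf
    rw [eval_gmap]
    rw [h _ ⟨f, hf, rfl⟩]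
    exact map_zero g

lemma galAct_mul (g h : AlgebraicClosure k ≃ₐ[k] AlgebraicClosure k) (q : Pt k) :
    galAct (g * h) q = galAct g (galAct h q) := rfl

lemma galAct_one (q : Pt k) : galAct (1 : AlgebraicClosure k ≃ₐ[k] AlgebraicClosure k) q = q := rfl

/-- `actp φ` as an equivalence. -/
def actpE (φ : PlaneAut k) : Pt k ≃ Pt k where
  toFun := actp φ
  invFun := actp φ⁻¹
  left_inv q := by rw [← actp_mul, inv_mul_cancel, actp_one]
  right_inv q := by rw [← actp_mul, mul_inv_cancel, actp_one]

/-- `galAct g` as an equivalence. -/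
def galE (g : AlgebraicClosure k ≃ₐ[k] AlgebraicClosure k) : Pt k ≃ Pt k where
  toFun := galAct g
  invFun := galAct g⁻¹
  left_inv q := by rw [← galAct_mul, inv_mul_cancel, galAct_one]
  right_inv q := by rw [← galAct_mul, mul_inv_cancel, galAct_one]

lemma actp_image_closed (φ : PlaneAut k) {Z : Set (Pt k)} (hZ : IsZClosed Z) :
    IsZClosed (actp φ '' Z) := by
  have h : actp φ '' Z = actp φ⁻¹ ⁻¹' Z := (actpE φ).image_eq_preimage_symm Z
  rw [h]
  exact actp_preimage_closed _ hZ

lemma galAct_image_closed (g : AlgebraicClosure k ≃ₐ[k] AlgebraicClosure k) {Z : Set (Pt k)}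
    (hZ : IsZClosed Z) : IsZClosed (galAct g '' Z) := by
  have h : galAct g '' Z = galAct g⁻¹ ⁻¹' Z := (galE g).image_eq_preimage_symm Z
  rw [h]
  exact galAct_preimage_closed _ hZ

lemma zclos_image_of (e : Pt k ≃ Pt k)
    (hpre : ∀ Z : Set (Pt k), IsZClosed Z → IsZClosed (⇑e ⁻¹' Z))
    (himg : ∀ Z : Set (Pt k), IsZClosed Z → IsZClosed (⇑e '' Z)) (Δ : Set (Pt k)) :
    ⇑e '' zclos Δ = zclos (⇑e '' Δ) := by
  apply subset_antisymm
  · rw [Set.image_subset_iff]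
    exact zclos_min (Set.image_subset_iff.mp (subset_zclos (⇑e '' Δ)))
      (hpre _ (isZClosed_zclos _))
  · exact zclos_min (Set.image_mono (subset_zclos Δ)) (himg _ (isZClosed_zclos Δ))

lemma IsZIrreducible.image {C : Set (Pt k)} (hC : IsZIrreducible C) (e : Pt k ≃ Pt k)
    (hpre : ∀ Z : Set (Pt k), IsZClosed Z → IsZClosed (⇑e ⁻¹' Z)) :
    IsZIrreducible (⇑e '' C) := by
  refine ⟨hC.1.image e, fun Z₁ Z₂ h1 h2 hsub => ?_⟩
  have h := Set.image_subset_iff.mp hsub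
  rw [Set.preimage_union] at h
  rcases hC.2 _ _ (hpre _ h1) (hpre _ h2) h with hc | hc
  · exact Or.inl (Set.image_subset_iff.mpr hc)
  · exact Or.inr (Set.image_subset_iff.mpr hc)

lemma IsIrredComponentOf.image {C S : Set (Pt k)} (hC : IsIrredComponentOf C S) (e : Pt k ≃ Pt k)
    (hpre : ∀ Z : Set (Pt k), IsZClosed Z → IsZClosed (⇑e ⁻¹' Z))
    (hpre' : ∀ Z : Set (Pt k), IsZClosed Z → IsZClosed (⇑e.symm ⁻¹' Z))
    (hS : ⇑e '' S = S) : IsIrredComponentOf (⇑e '' C) S := by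
  have hSsymm : ⇑e.symm '' S = S := by
    conv_lhs => rw [← hS]
    exact Equiv.symm_image_image e S
  refine ⟨hC.1.image e hpre, ?_, ?_⟩
  · rw [← hS]
    exact Set.image_mono hC.2.1
  · intro C' hC' hC'S hsub
    have h1 : IsZIrreducible (⇑e.symm '' C') := hC'.image e.symm hpre'
    have h2 : ⇑e.symm '' C' ⊆ S := hSsymm ▸ Set.image_mono hC'S
    have h3 : C ⊆ ⇑e.symm '' C' := by
      intro x hx
      exact ⟨e x, hsub ⟨x, hx, rfl⟩, e.symm_apply_apply x⟩
    have h4 := hC.2.2 _ h1 h2 h3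
    rw [h4, Equiv.image_symm_image]

end Stmt15Aux2
noncomputable section Stmt15Aux3
open MvPolynomial Ideal

variable {k : Type*} [Field k]

lemma vanishingIdeal_radical {S : Set (Pt k)} (hS : IsZClosed S) :
    (vanishingIdeal (AlgebraicClosure k) S).radical = vanishingIdeal (AlgebraicClosure k) S := by
  have h := vanishingIdeal_zeroLocus_eq_radical (K := AlgebraicClosure k) (vanishingIdeal (AlgebraicClosure k) S)
  have h2 : zeroLocus (AlgebraicClosure k) (vanishingIdeal (AlgebraicClosure k) S) = S := zclos_eq_self hS
  rw [h2] at h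
  exact h.symm

lemma zeroLocus_eq_self {S : Set (Pt k)} (hS : IsZClosed S) :
    zeroLocus (AlgebraicClosure k) (vanishingIdeal (AlgebraicClosure k) S) = S := zclos_eq_self hS

lemma zeroLocus_prime_irreducible {P : Ideal (MvPolynomial (Fin 2) (AlgebraicClosure k))}
    (hP : P.IsPrime) : IsZIrreducible (zeroLocus (AlgebraicClosure k) P) := by
  have hrad : vanishingIdeal (AlgebraicClosure k) (zeroLocus (AlgebraicClosure k) P) = P := by
    rw [vanishingIdeal_zeroLocus_eq_radical, hP.radical]
  constructor
  · by_contra h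
    rw [Set.not_nonempty_iff_eq_empty] at h
    rw [h, vanishingIdeal_empty] at hrad
    exact hP.ne_top hrad.symm
  · rintro Z₁ Z₂ ⟨I₁, rfl⟩ ⟨I₂, rfl⟩ hsub
    by_contra hc
    push_neg at hc
    obtain ⟨hc1, hc2⟩ := hc
    rw [Set.not_subset] at hc1 hc2
    obtain ⟨q₁, hq₁P, hq₁⟩ := hc1
    obtain ⟨q₂, hq₂P, hq₂⟩ := hc2
    rw [mem_zeroLocus_iff] at hq₁ hq₂
    push_neg at hq₁ hq₂
    obtain ⟨f, hf, hfq⟩ := hq₁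
    obtain ⟨g, hg, hgq⟩ := hq₂
    have hfg : f * g ∈ P := by
      rw [← hrad]
      intro x hx
      rw [_root_.map_mul]
      rcases hsub hx with hx' | hx'
      · rw [hx' f hf, zero_mul]
      · rw [hx' g hg, mul_zero]
    rcases hP.mem_or_mem hfg with h | h
    · exact hfq (hq₁P _ h)
    · exact hgq (hq₂P _ h)

lemma minimalPrimes_finite (I : Ideal (MvPolynomial (Fin 2) (AlgebraicClosure k))) :
    I.minimalPrimes.Finite := by
  rw [Ideal.minimalPrimes_eq_comap]
  exact (minimalPrimes.finite_of_isNoetherianRing _).image _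

lemma zeroLocus_sInf_finite {M : Set (Ideal (MvPolynomial (Fin 2) (AlgebraicClosure k)))}
    (hM : M.Finite) : zeroLocus (AlgebraicClosure k) (sInf M) = ⋃ P ∈ M, zeroLocus (AlgebraicClosure k) P := by
  apply subset_antisymm
  · intro q hq
    by_contra hc
    simp only [Set.mem_iUnion, not_exists] at hc
    have h : ∀ P : Ideal (MvPolynomial (Fin 2) (AlgebraicClosure k)),
        ∃ f, P ∈ M → f ∈ P ∧ eval q f ≠ 0 := by
      intro P
      by_cases hPM : P ∈ M
      · have := hc P hPM
        rw [mem_zeroLocus_iff] at this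
        push_neg at this
        obtain ⟨f, hf, hfq⟩ := this
        exact ⟨f, fun _ => ⟨hf, hfq⟩⟩
      · exact ⟨0, fun h => absurd h hPM⟩
    choose f hf using h
    have hF : (∏ P ∈ hM.toFinset, f P) ∈ sInf M := by
      rw [Ideal.mem_sInf]
      intro P hPM
      obtain ⟨c, hc'⟩ := Finset.dvd_prod_of_mem f (hM.mem_toFinset.mpr hPM)
      rw [hc']
      exact P.mul_mem_right c (hf P hPM).1
    have h0 := hq _ hF
    rw [map_prod] at h0
    obtain ⟨P, hPM, hP0⟩ := Finset.prod_eq_zero_iff.mp h0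
    exact (hf P (hM.mem_toFinset.mp hPM)).2 hP0
  · intro q hq
    simp only [Set.mem_iUnion] at hq
    obtain ⟨P, hPM, hqP⟩ := hq
    exact zeroLocus_anti_mono (sInf_le hPM) hqP

lemma closed_decomp {S : Set (Pt k)} (hS : IsZClosed S) :
    S = ⋃ P ∈ (vanishingIdeal (AlgebraicClosure k) S).minimalPrimes, zeroLocus (AlgebraicClosure k) P := by
  have h : zeroLocus (AlgebraicClosure k) (vanishingIdeal (AlgebraicClosure k) S)
      = zeroLocus (AlgebraicClosure k) (sInf (vanishingIdeal (AlgebraicClosure k) S).minimalPrimes) := by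
    rw [Ideal.sInf_minimalPrimes, vanishingIdeal_radical hS]
  conv_lhs => rw [← zeroLocus_eq_self hS, h, zeroLocus_sInf_finite (minimalPrimes_finite _)]

lemma component_of_minimalPrime {S : Set (Pt k)} (hS : IsZClosed S)
    {P : Ideal (MvPolynomial (Fin 2) (AlgebraicClosure k))}
    (hP : P ∈ (vanishingIdeal (AlgebraicClosure k) S).minimalPrimes) :
    IsIrredComponentOf (zeroLocus (AlgebraicClosure k) P) S := by
  have hPprime : P.IsPrime := hP.1.1
  have hPsub : zeroLocus (AlgebraicClosure k) P ⊆ S := by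
    conv_rhs => rw [← zeroLocus_eq_self hS]
    exact zeroLocus_anti_mono hP.1.2
  refine ⟨zeroLocus_prime_irreducible hPprime, hPsub, ?_⟩
  intro C' hC' hC'S hsub
  have hclos : zclos C' ⊆ S := zclos_min hC'S hS
  have hcov : zclos C' ⊆ ⋃ P' ∈ (minimalPrimes_finite
      (vanishingIdeal (AlgebraicClosure k) S)).toFinset, zeroLocus (AlgebraicClosure k) P' := by
    intro x hx
    have := (closed_decomp hS) ▸ hclos hx
    simp only [Set.mem_iUnion, Set.Finite.mem_toFinset] at this ⊢
    exact this
  obtain ⟨P', hP'M, hCP'⟩ := (hC'.zclos).subset_of_cover _ _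
    (fun P' _ => ⟨P', rfl⟩) hcov
  rw [Set.Finite.mem_toFinset] at hP'M
  have hP'P : P' ≤ P := by
    have h1 : P' ≤ vanishingIdeal (AlgebraicClosure k) (zeroLocus (AlgebraicClosure k) P') := le_vanishingIdeal_zeroLocus P'
    have h2 : vanishingIdeal (AlgebraicClosure k) (zeroLocus (AlgebraicClosure k) P') ≤ vanishingIdeal (AlgebraicClosure k) (zeroLocus (AlgebraicClosure k) P) :=
      vanishingIdeal_anti_mono (hsub.trans ((subset_zclos C').trans hCP'))
    have h3 : vanishingIdeal (AlgebraicClosure k) (zeroLocus (AlgebraicClosure k) P) = P := by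
      rw [vanishingIdeal_zeroLocus_eq_radical, hPprime.radical]
    exact h3 ▸ (h1.trans h2)
  have hPP' : P ≤ P' := hP.2 hP'M.1 hP'P
  have hPeq : P' = P := le_antisymm hP'P hPP'
  apply subset_antisymm
  · exact hsub
  · exact (subset_zclos C').trans (hPeq ▸ hCP')

lemma components_finite {S : Set (Pt k)} (hS : IsZClosed S) :
    {D : Set (Pt k) | IsIrredComponentOf D S}.Finite := by
  apply Set.Finite.subset (((minimalPrimes_finite
    (vanishingIdeal (AlgebraicClosure k) S)).image (zeroLocus (AlgebraicClosure k))))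
  intro D hD
  have hcov : D ⊆ ⋃ P ∈ (minimalPrimes_finite
      (vanishingIdeal (AlgebraicClosure k) S)).toFinset, zeroLocus (AlgebraicClosure k) P := by
    intro x hx
    have := (closed_decomp hS) ▸ hD.2.1 hx
    simp only [Set.mem_iUnion, Set.Finite.mem_toFinset] at this ⊢
    exact this
  obtain ⟨P, hPM, hDP⟩ := hD.1.subset_of_cover _ _ (fun P' _ => ⟨P', rfl⟩) hcov
  rw [Set.Finite.mem_toFinset] at hPM
  have hcomp := component_of_minimalPrime hS hPM
  have : D = zeroLocus (AlgebraicClosure k) P := hD.2.2 _ hcomp.1 hcomp.2.1 hDP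
  exact ⟨P, hPM, this.symm⟩

lemma exists_component_mem {S : Set (Pt k)} (hS : IsZClosed S) {x : Pt k} (hx : x ∈ S) :
    ∃ C, IsIrredComponentOf C S ∧ x ∈ C := by
  have := (closed_decomp hS) ▸ hx
  simp only [Set.mem_iUnion] at this
  obtain ⟨P, hPM, hxP⟩ := this
  exact ⟨zeroLocus (AlgebraicClosure k) P, component_of_minimalPrime hS hPM, hxP⟩

lemma IsIrredComponentOf.closed {S C : Set (Pt k)} (hS : IsZClosed S)
    (hC : IsIrredComponentOf C S) : IsZClosed C := by
  have h := hC.2.2 (zclos C) (hC.1.zclos) (zclos_min hC.2.1 hS) (subset_zclos C)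
  rw [h]
  exact isZClosed_zclos C

end Stmt15Aux3
noncomputable section Stmt15Aux4
open MvPolynomial Ideal

variable {k : Type*} [Field k]

lemma actp_injective (φ : PlaneAut k) : Function.Injective (actp φ) :=
  (actpE φ).injective

lemma actp_zpow_image_nat {ψ : PlaneAut k} {A : Set (Pt k)} (h : actp ψ '' A = A) (n : ℕ) :
    actp (ψ ^ n) '' A = A := by
  induction n with
  | zero => rw [pow_zero]; simp [actp_one]
  | succ n ih =>
    rw [pow_succ']
    have hc : actp (ψ * ψ ^ n) = actp ψ ∘ actp (ψ ^ n) := funext fun q => actp_mul _ _ _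
    rw [hc, Set.image_comp, ih, h]

lemma actp_zpow_image {ψ : PlaneAut k} {A : Set (Pt k)} (h : actp ψ '' A = A) (m : ℤ) :
    actp (ψ ^ m) '' A = A := by
  rcases m with n | n
  · rw [Int.ofNat_eq_coe, zpow_natCast]
    exact actp_zpow_image_nat h n
  · have h1 : actp (ψ ^ (n + 1 : ℕ)) '' (actp (ψ ^ Int.negSucc n) '' A) = A := by
      have hc : actp (ψ ^ (n + 1 : ℕ)) ∘ actp (ψ ^ Int.negSucc n)
          = actp ((ψ ^ (n + 1 : ℕ)) * ψ ^ Int.negSucc n) := funext fun q => (actp_mul _ _ _).symm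
      rw [← Set.image_comp, hc]
      have : (ψ ^ (n + 1 : ℕ)) * ψ ^ Int.negSucc n = 1 := by
        rw [← zpow_natCast, Int.negSucc_eq]
        group
      rw [this]
      simp [actp_one]
    have h2 : actp (ψ ^ (n + 1 : ℕ)) '' A = A := actp_zpow_image_nat h (n + 1)
    exact Set.image_injective.mpr (actp_injective _) (h1.trans h2.symm)

lemma mem_of_image_eq {ψ : PlaneAut k} {A : Set (Pt k)} (h : actp ψ '' A = A) {x : Pt k}
    (hx : x ∈ A) : actp ψ x ∈ A :=
  h ▸ ⟨x, hx, rfl⟩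

lemma actp_image_orbAut (φ : PlaneAut k) (p : Pt k) :
    actp φ '' orbAut φ p = orbAut φ p := by
  ext q
  constructor
  · rintro ⟨x, ⟨n, rfl⟩, rfl⟩
    refine ⟨1 + n, ?_⟩
    rw [zpow_add, zpow_one, actp_mul]
  · rintro ⟨n, rfl⟩
    refine ⟨actp (φ ^ (n - 1)) p, ⟨n - 1, rfl⟩, ?_⟩
    rw [← actp_mul]
    congr 1
    conv_rhs => rw [show n = 1 + (n - 1) by omega]
    rw [zpow_add, zpow_one]

lemma actp_image_zclos (φ : PlaneAut k) (Δ : Set (Pt k)) :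
    actp φ '' zclos Δ = zclos (actp φ '' Δ) :=
  zclos_image_of (actpE φ) (fun _ hZ => actp_preimage_closed φ hZ)
    (fun _ hZ => actp_image_closed φ hZ) Δ

lemma galAct_image_zclos (g : AlgebraicClosure k ≃ₐ[k] AlgebraicClosure k) (Δ : Set (Pt k)) :
    galAct g '' zclos Δ = zclos (galAct g '' Δ) :=
  zclos_image_of (galE g) (fun _ hZ => galAct_preimage_closed g hZ)
    (fun _ hZ => galAct_image_closed g hZ) Δ

lemma image_iterate_actp (φ : PlaneAut k) (j : ℕ) (A : Set (Pt k)) :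
    (fun B => actp φ '' B)^[j] A = actp (φ ^ j) '' A := by
  induction j with
  | zero => simp [pow_zero, actp_one]
  | succ j ih =>
    rw [Function.iterate_succ_apply', ih, pow_succ']
    have hc : actp (φ * φ ^ j) = actp φ ∘ actp (φ ^ j) := funext fun q => actp_mul _ _ _
    rw [hc, Set.image_comp]

lemma iterate_mod {α : Type*} {f : α → α} {a : α} {ℓ : ℕ} (hℓ : 0 < ℓ) (hper : f^[ℓ] a = a) :
    ∀ n : ℕ, f^[n] a = f^[n % ℓ] a := by
  intro n
  induction n using Nat.strong_induction_on with
  | _ n ih =>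
    by_cases h : n < ℓ
    · rw [Nat.mod_eq_of_lt h]
    · push_neg at h
      have h1 : n - ℓ + ℓ = n := Nat.sub_add_cancel h
      have h2 : f^[n] a = f^[n - ℓ] a := by
        conv_lhs => rw [← h1]
        rw [Function.iterate_add_apply, hper]
      rw [h2, ih _ (by omega)]
      congr 1
      conv_rhs => rw [← h1]
      rw [Nat.add_mod_right]

lemma ncard_multiple {α : Type*} (ℓ : ℕ) (hℓ : 0 < ℓ) (f : α → α) :
    ∀ (n : ℕ) (T : Set α), T.ncard = n → T.Finite → (∀ a ∈ T, f a ∈ T) →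
      (∀ a ∈ T, f^[ℓ] a = a) →
      (∀ a ∈ T, ∀ j₁, j₁ < ℓ → ∀ j₂, j₂ < ℓ → f^[j₁] a = f^[j₂] a → j₁ = j₂) →
      ℓ ∣ T.ncard := by
  intro n
  induction n using Nat.strong_induction_on with
  | _ n ih =>
    intro T hn hfin hmaps hper hinj
    rcases T.eq_empty_or_nonempty with rfl | ⟨a, ha⟩
    · simp
    · have hiter : ∀ j : ℕ, f^[j] a ∈ T := by
        intro j
        induction j with
        | zero => exact ha
        | succ j ihj => rw [Function.iterate_succ_apply']; exact hmaps _ ihj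
      classical
      set Bf : Finset α := (Finset.range ℓ).image (fun j => f^[j] a) with hBf
      have hBcard : Bf.card = ℓ := by
        rw [Finset.card_image_of_injOn, Finset.card_range]
        intro j₁ h₁ j₂ h₂ he
        exact hinj a ha j₁ (Finset.mem_range.mp h₁) j₂ (Finset.mem_range.mp h₂) he
      have hBT : ↑Bf ⊆ T := by
        intro x hx
        simp only [hBf, Finset.coe_image, Finset.coe_range, Set.mem_image] at hx
        obtain ⟨j, _, rfl⟩ := hx
        exact hiter j
      have hmem_B : ∀ m : ℕ, f^[m] a ∈ Bf := by
        intro m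
        rw [iterate_mod hℓ (hper a ha) m]
        simp only [hBf, Finset.mem_image]
        exact ⟨m % ℓ, Finset.mem_range.mpr (Nat.mod_lt _ hℓ), rfl⟩
      set T' := T \ ↑Bf with hT'
      have hmaps' : ∀ x ∈ T', f x ∈ T' := by
        rintro x ⟨hxT, hxB⟩
        refine ⟨hmaps x hxT, fun hfxB => hxB ?_⟩
        simp only [Finset.coe_image, Finset.coe_range, Set.mem_image, Finset.mem_coe,
          hBf, Finset.mem_image, Finset.mem_range] at hfxB
        obtain ⟨j, hj, hje⟩ := hfxB
        have hx2 : x = f^[ℓ - 1 + j] a := by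
          have h3 : x = f^[ℓ - 1] (f x) := by
            have h4 : f^[(ℓ - 1) + 1] x = x := by
              rw [show ℓ - 1 + 1 = ℓ by omega]
              exact hper x hxT
            conv_lhs => rw [← h4]
            rw [Function.iterate_succ_apply]
          rw [h3, ← hje, ← Function.iterate_add_apply]
        rw [hx2]
        exact hmem_B _
      have hsubper : ∀ x ∈ T', f^[ℓ] x = x := fun x hx => hper x hx.1
      have hsubinj : ∀ x ∈ T', ∀ j₁, j₁ < ℓ → ∀ j₂, j₂ < ℓ → f^[j₁] x = f^[j₂] x → j₁ = j₂ :=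
        fun x hx => hinj x hx.1
      have hfin' : T'.Finite := hfin.diff
      have hcard' : T'.ncard = T.ncard - ℓ := by
        rw [hT', Set.ncard_diff hBT Bf.finite_toSet, Set.ncard_coe_finset, hBcard]
      have hle : ℓ ≤ T.ncard := by
        have := Set.ncard_le_ncard hBT hfin
        rwa [Set.ncard_coe_finset, hBcard] at this
      have hlt : T'.ncard < n := by
        rw [hcard', hn]
        have hpos : 0 < n := hn ▸ (Set.ncard_pos hfin).mpr ⟨a, ha⟩
        omega
      have hdvd := ih _ hlt T' rfl hfin' hmaps' hsubper hsubinj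
      rw [hcard'] at hdvd
      have : T.ncard = (T.ncard - ℓ) + ℓ := by omega
      rw [this]
      exact Nat.dvd_add hdvd dvd_rfl

end Stmt15Aux4
noncomputable section Stmt15Aux5
open MvPolynomial Ideal

variable {k : Type*} [Field k]

lemma aeval_galAct (g : AlgebraicClosure k ≃ₐ[k] AlgebraicClosure k) (q : Pt k)
    (P : MvPolynomial (Fin 2) k) : aeval (galAct g q) P = g (aeval q P) := by
  have h : (aeval (galAct g q) : MvPolynomial (Fin 2) k →ₐ[k] AlgebraicClosure k)
      = (g.toAlgHom.comp (aeval q)) := by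
    apply MvPolynomial.algHom_ext
    intro i
    simp [galAct]
  exact DFunLike.congr_fun h P

lemma actp_galAct (ψ : PlaneAut k) (g : AlgebraicClosure k ≃ₐ[k] AlgebraicClosure k) (x : Pt k) :
    actp ψ (galAct g x) = galAct g (actp ψ x) := by
  funext i
  exact aeval_galAct g x (ψ.symm (X i))

lemma actp_image_galAct_image (ψ : PlaneAut k) (g : AlgebraicClosure k ≃ₐ[k] AlgebraicClosure k)
    (A : Set (Pt k)) : actp ψ '' (galAct g '' A) = galAct g '' (actp ψ '' A) := by
  rw [← Set.image_comp, ← Set.image_comp]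
  have hc : actp ψ ∘ galAct g = galAct g ∘ actp ψ := funext fun x => actp_galAct ψ g x
  rw [hc]

lemma hatSet_isZClosed (Δ : Set (Pt k)) : IsZClosed (hatSet Δ) := by
  refine ⟨Ideal.span ((MvPolynomial.map (emb k)) ''
    {P : MvPolynomial (Fin 2) k | ∀ x ∈ Δ, aeval x P = 0}), ?_⟩
  rw [zeroLocus_span]
  ext q
  simp only [hatSet, Set.mem_setOf_eq]
  constructor
  · rintro h _ ⟨P, hP, rfl⟩
    have := h P hP
    rwa [aeval_def, ← eval_map] at this
  · intro h P hP
    rw [aeval_def, ← eval_map]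
    exact h _ ⟨P, hP, rfl⟩

lemma subset_hatSet (Δ : Set (Pt k)) : Δ ⊆ hatSet Δ := fun x hx P hP => hP x hx

lemma zclos_subset_hatSet (Δ : Set (Pt k)) : zclos Δ ⊆ hatSet Δ :=
  zclos_min (subset_hatSet Δ) (hatSet_isZClosed Δ)

lemma galAct_mem_hatSet (g : AlgebraicClosure k ≃ₐ[k] AlgebraicClosure k) {Δ : Set (Pt k)}
    {q : Pt k} (hq : q ∈ hatSet Δ) : galAct g q ∈ hatSet Δ := by
  intro P hP
  rw [aeval_galAct, hq P hP]
  exact map_zero g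

lemma galAct_image_hatSet (g : AlgebraicClosure k ≃ₐ[k] AlgebraicClosure k) (Δ : Set (Pt k)) :
    galAct g '' hatSet Δ = hatSet Δ := by
  apply subset_antisymm
  · rintro _ ⟨x, hx, rfl⟩
    exact galAct_mem_hatSet g hx
  · intro x hx
    exact ⟨galAct g⁻¹ x, galAct_mem_hatSet g⁻¹ hx,
      by rw [← galAct_mul, mul_inv_cancel, galAct_one]⟩

lemma actp_mem_hatSet {ψ : PlaneAut k} {Δ : Set (Pt k)} (h : ∀ x ∈ Δ, actp ψ x ∈ Δ) {q : Pt k}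
    (hq : q ∈ hatSet Δ) : actp ψ q ∈ hatSet Δ := by
  intro P hP
  rw [aeval_actp]
  refine hq _ ?_
  intro x hx
  rw [← aeval_actp]
  exact hP _ (h x hx)

lemma actp_image_hatSet (φ : PlaneAut k) (p : Pt k) :
    actp φ '' hatSet (orbAut φ p) = hatSet (orbAut φ p) := by
  have h1 : ∀ x ∈ orbAut φ p, actp φ x ∈ orbAut φ p :=
    fun x hx => mem_of_image_eq (actp_image_orbAut φ p) hx
  have him : actp φ⁻¹ '' orbAut φ p = orbAut φ p := by
    have := actp_zpow_image (A := orbAut φ p) (actp_image_orbAut φ p) (-1)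
    rwa [zpow_neg_one] at this
  have h2 : ∀ x ∈ orbAut φ p, actp φ⁻¹ x ∈ orbAut φ p := fun x hx => mem_of_image_eq him hx
  apply subset_antisymm
  · rintro _ ⟨x, hx, rfl⟩
    exact actp_mem_hatSet h1 hx
  · intro x hx
    refine ⟨actp φ⁻¹ x, actp_mem_hatSet h2 hx, ?_⟩
    rw [← actp_mul, mul_inv_cancel, actp_one]

lemma finite_range_of_factor {α β γ : Type*} {u : α → β} {v : α → γ}
    (hu : (Set.range u).Finite) (h : ∀ a a', u a = u a' → v a = v a') :
    (Set.range v).Finite := by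
  have hsub : Set.range v ⊆ ⋃ b ∈ Set.range u, v '' (u ⁻¹' {b}) := by
    rintro _ ⟨a, rfl⟩
    exact Set.mem_biUnion ⟨a, rfl⟩ ⟨a, rfl, rfl⟩
  refine Set.Finite.subset (Set.Finite.biUnion hu ?_) hsub
  intro b _
  apply Set.Subsingleton.finite
  rintro _ ⟨a, ha, rfl⟩ _ ⟨a', ha', rfl⟩
  exact h a a' ((Set.mem_singleton_iff.mp ha).trans (Set.mem_singleton_iff.mp ha').symm)

lemma finite_galOrbit (x : AlgebraicClosure k) :
    (Set.range fun g : AlgebraicClosure k ≃ₐ[k] AlgebraicClosure k => g x).Finite := by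
  have hx : IsIntegral k x := Algebra.IsIntegral.isIntegral x
  have hne : Polynomial.map (emb k) (minpoly k x) ≠ 0 :=
    Polynomial.map_ne_zero (minpoly.ne_zero hx)
  apply (Polynomial.finite_setOf_isRoot hne).subset
  rintro _ ⟨g, rfl⟩
  have h1 : Polynomial.aeval (g x) (minpoly k x) = 0 := by
    have h0 := Polynomial.aeval_algHom_apply g.toAlgHom x (minpoly k x)
    rw [minpoly.aeval, map_zero] at h0
    exact h0
  rwa [Polynomial.aeval_def, ← Polynomial.eval_map] at h1

lemma finite_pointOrbit (q : Pt k) :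
    (Set.range fun g : AlgebraicClosure k ≃ₐ[k] AlgebraicClosure k => galAct g q).Finite := by
  have hsub : Set.range (fun g : AlgebraicClosure k ≃ₐ[k] AlgebraicClosure k => galAct g q)
      ⊆ Set.pi Set.univ (fun i =>
        Set.range fun g : AlgebraicClosure k ≃ₐ[k] AlgebraicClosure k => g (q i)) := by
    rintro _ ⟨g, rfl⟩ i _
    exact ⟨g, rfl⟩
  exact (Set.Finite.pi (fun i => finite_galOrbit (q i))).subset hsub

lemma finite_galOrbit_poly (f : MvPolynomial (Fin 2) (AlgebraicClosure k)) :
    (Set.range fun g : AlgebraicClosure k ≃ₐ[k] AlgebraicClosure k =>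
      MvPolynomial.map g.toAlgHom.toRingHom f).Finite := by
  apply finite_range_of_factor
    (u := fun g : AlgebraicClosure k ≃ₐ[k] AlgebraicClosure k =>
      fun s : f.support => g (MvPolynomial.coeff s.1 f))
  · apply (Set.Finite.pi (fun s : f.support => finite_galOrbit (MvPolynomial.coeff s.1 f))).subset
    rintro _ ⟨g, rfl⟩ s _
    exact ⟨g, rfl⟩
  · intro g g' h
    apply MvPolynomial.ext
    intro s
    rw [coeff_map, coeff_map]
    by_cases hs : s ∈ f.support
    · exact congrFun h ⟨s, hs⟩
    · rw [MvPolynomial.notMem_support_iff.mp hs, map_zero, map_zero]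

lemma galAct_preimage_zeroLocus (g : AlgebraicClosure k ≃ₐ[k] AlgebraicClosure k)
    (I : Ideal (MvPolynomial (Fin 2) (AlgebraicClosure k))) :
    galAct g ⁻¹' zeroLocus (AlgebraicClosure k) I
      = zeroLocus (AlgebraicClosure k) (Ideal.span (⇑(MvPolynomial.map g.symm.toAlgHom.toRingHom) '' I)) := by
  rw [zeroLocus_span]
  ext q
  simp only [Set.mem_preimage, mem_zeroLocus_iff, Set.mem_setOf_eq, aeval_eq_eval]
  constructor
  · rintro h _ ⟨f, hf, rfl⟩
    have := h f hf
    rw [eval_gmap] at this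
    exact (map_eq_zero_iff g g.injective).mp this
  · intro h f hf
    rw [eval_gmap, h _ ⟨f, hf, rfl⟩]
    exact map_zero g

lemma galAct_image_zeroLocus (g : AlgebraicClosure k ≃ₐ[k] AlgebraicClosure k)
    (I : Ideal (MvPolynomial (Fin 2) (AlgebraicClosure k))) :
    galAct g '' zeroLocus (AlgebraicClosure k) I
      = zeroLocus (AlgebraicClosure k) (Ideal.span (⇑(MvPolynomial.map g.toAlgHom.toRingHom) '' I)) := by
  have h := (galE g).image_eq_preimage_symm (zeroLocus (AlgebraicClosure k) I)
  have h2 : ⇑(galE g).symm = galAct g⁻¹ := rfl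
  have h3 : (g⁻¹ : AlgebraicClosure k ≃ₐ[k] AlgebraicClosure k).symm = g := by
    exact AlgEquiv.symm_symm g
  show ⇑(galE g) '' zeroLocus (AlgebraicClosure k) I = _
  rw [h, h2, galAct_preimage_zeroLocus g⁻¹ I, h3]

lemma finite_galImages {Z : Set (Pt k)} (hZ : IsZClosed Z) :
    (Set.range fun g : AlgebraicClosure k ≃ₐ[k] AlgebraicClosure k => galAct g '' Z).Finite := by
  obtain ⟨t, ht⟩ : (vanishingIdeal (AlgebraicClosure k) Z).FG :=
    IsNoetherian.noetherian _
  have key : ∀ g : AlgebraicClosure k ≃ₐ[k] AlgebraicClosure k,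
      galAct g '' Z = zeroLocus (AlgebraicClosure k) (Ideal.span
        (⇑(MvPolynomial.map g.toAlgHom.toRingHom) '' (t : Set (MvPolynomial (Fin 2)
          (AlgebraicClosure k))))) := by
    intro g
    conv_lhs => rw [← zeroLocus_eq_self hZ]
    rw [galAct_image_zeroLocus]
    have h1 : Ideal.span (⇑(MvPolynomial.map g.toAlgHom.toRingHom)
        '' (vanishingIdeal (AlgebraicClosure k) Z : Set _))
        = Ideal.map (MvPolynomial.map g.toAlgHom.toRingHom)
          (vanishingIdeal (AlgebraicClosure k) Z) := rfl
    rw [h1, ← ht, Ideal.map_span]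
  apply finite_range_of_factor
    (u := fun g : AlgebraicClosure k ≃ₐ[k] AlgebraicClosure k =>
      fun f : (t : Finset (MvPolynomial (Fin 2) (AlgebraicClosure k))) =>
        MvPolynomial.map g.toAlgHom.toRingHom f.1)
  · apply (Set.Finite.pi (fun f : (t : Finset (MvPolynomial (Fin 2) (AlgebraicClosure k))) =>
      finite_galOrbit_poly f.1)).subset
    rintro _ ⟨g, rfl⟩ s _
    exact ⟨g, rfl⟩
  · intro g g' h
    have him : ⇑(MvPolynomial.map g.toAlgHom.toRingHom)
        '' (t : Set (MvPolynomial (Fin 2) (AlgebraicClosure k)))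
        = ⇑(MvPolynomial.map g'.toAlgHom.toRingHom)
          '' (t : Set (MvPolynomial (Fin 2) (AlgebraicClosure k))) := by
      apply Set.image_congr
      intro f hf
      exact congrFun h ⟨f, Finset.mem_coe.mp hf⟩
    rw [key g, key g', him]

end Stmt15Aux5
noncomputable section Stmt15Aux6
open MvPolynomial Ideal

variable {k : Type*} [Field k]

lemma fixed_mem_range [PerfectField k] {x : AlgebraicClosure k}
    (h : ∀ g : AlgebraicClosure k ≃ₐ[k] AlgebraicClosure k, g x = x) :
    ∃ a : k, emb k a = x := by
  classical
  by_contra hc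
  push_neg at hc
  have hnr : x ∉ (algebraMap k (AlgebraicClosure k)).range := by
    rintro ⟨a, ha⟩
    exact hc a ha
  have hint : IsIntegral k x := Algebra.IsIntegral.isIntegral x
  have hdeg : 2 ≤ (minpoly k x).natDegree := (minpoly.two_le_natDegree_iff hint).mpr hnr
  have hsep : (minpoly k x).Separable := Algebra.IsSeparable.isSeparable k x
  set P := Polynomial.map (emb k) (minpoly k x) with hP
  have hPne : P ≠ 0 := Polynomial.map_ne_zero (minpoly.ne_zero hint)
  have hsplits : P.Splits := IsAlgClosed.splits P
  have hcard : P.roots.card = P.natDegree := (Polynomial.splits_iff_card_roots).mp hsplits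
  have hPdeg : P.natDegree = (minpoly k x).natDegree := Polynomial.natDegree_map (emb k)
  have hnodup : P.roots.Nodup := Polynomial.nodup_roots (hsep.map)
  have hxroot : x ∈ P.roots := by
    rw [Polynomial.mem_roots hPne]
    show Polynomial.eval x P = 0
    rw [hP, Polynomial.eval_map, ← Polynomial.aeval_def]
    exact minpoly.aeval k x
  have hy : ∃ y ∈ P.roots, y ≠ x := by
    by_contra hcy
    push_neg at hcy
    have hsub : P.roots.toFinset ⊆ {x} := by
      intro y hymem
      rw [Multiset.mem_toFinset] at hymem
      rw [Finset.mem_singleton]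
      exact hcy y hymem
    have hle : P.roots.toFinset.card ≤ 1 := le_trans (Finset.card_le_card hsub) (by simp)
    rw [Multiset.toFinset_card_of_nodup hnodup, hcard, hPdeg] at hle
    omega
  obtain ⟨y, hyroot, hyne⟩ := hy
  have hyev : Polynomial.aeval y (minpoly k x) = 0 := by
    have := (Polynomial.mem_roots hPne).mp hyroot
    rw [Polynomial.IsRoot] at this
    rw [Polynomial.aeval_def, ← Polynomial.eval_map]
    exact this
  obtain ⟨σ, hσ⟩ := minpoly.exists_algEquiv_of_root' (hint.isAlgebraic) hyev
  rw [h σ] at hσ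
  exact hyne hσ.symm

lemma exists_map_emb [PerfectField k] {F : MvPolynomial (Fin 2) (AlgebraicClosure k)}
    (h : ∀ g : AlgebraicClosure k ≃ₐ[k] AlgebraicClosure k,
      MvPolynomial.map g.toAlgHom.toRingHom F = F) :
    ∃ Pk : MvPolynomial (Fin 2) k, MvPolynomial.map (emb k) Pk = F := by
  have hcoeff : ∀ s : Fin 2 →₀ ℕ, ∃ a : k, emb k a = coeff s F := by
    intro s
    apply fixed_mem_range
    intro g
    have h2 := congrArg (coeff s) (h g)
    rwa [coeff_map] at h2
  choose a ha using hcoeff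
  refine ⟨∑ s ∈ F.support, monomial s (a s), ?_⟩
  rw [map_sum]
  have hs : ∀ s ∈ F.support, MvPolynomial.map (emb k) (monomial s (a s))
      = monomial s (coeff s F) := fun s _ => by rw [map_monomial, ha]
  rw [Finset.sum_congr rfl hs]
  exact F.support_sum_monomial_coeff

lemma hatSet_subset_iUnion [PerfectField k] (Δ : Set (Pt k)) :
    hatSet Δ ⊆ ⋃ g : AlgebraicClosure k ≃ₐ[k] AlgebraicClosure k, galAct g '' zclos Δ := by
  classical
  intro q hq
  by_contra hc
  simp only [Set.mem_iUnion, not_exists] at hc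
  have hpt : ∀ g : AlgebraicClosure k ≃ₐ[k] AlgebraicClosure k,
      galAct g q ∉ zeroLocus (AlgebraicClosure k) (vanishingIdeal (AlgebraicClosure k) Δ) := by
    intro g hmem
    apply hc g⁻¹
    exact ⟨galAct g q, hmem, by rw [← galAct_mul, inv_mul_cancel, galAct_one]⟩
  have hPfin : (Set.range fun g : AlgebraicClosure k ≃ₐ[k] AlgebraicClosure k =>
    galAct g q).Finite := finite_pointOrbit q
  -- prime avoidance
  have havoid : ¬ ((vanishingIdeal (AlgebraicClosure k) Δ : Set (MvPolynomial (Fin 2)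
      (AlgebraicClosure k))) ⊆ ⋃ π ∈ ((hPfin.toFinset : Finset (Pt k)) : Set (Pt k)),
        (vanishingIdeal (AlgebraicClosure k) {π} : Set (MvPolynomial (Fin 2)
          (AlgebraicClosure k)))) := by
    rw [Ideal.subset_union_prime q q (fun π _ _ _ => inferInstance)]
    rintro ⟨π, hπ, hle⟩
    rw [Set.Finite.mem_toFinset] at hπ
    obtain ⟨g, rfl⟩ := hπ
    apply hpt g
    intro f hf
    exact hle hf _ rfl
  rw [Set.not_subset] at havoid
  obtain ⟨f, hfJ, hfnot⟩ := havoid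
  have hfne : ∀ g : AlgebraicClosure k ≃ₐ[k] AlgebraicClosure k,
      eval (galAct g q) f ≠ 0 := by
    intro g h0
    apply hfnot
    apply Set.mem_biUnion (Set.Finite.mem_toFinset hPfin |>.mpr ⟨g, rfl⟩)
    intro y hy
    rw [Set.mem_singleton_iff.mp hy]
    exact h0
  -- product of conjugates
  set Tf := (finite_galOrbit_poly f).toFinset with hTf
  set NormF := ∏ F ∈ Tf, F with hNormF
  have hmem_Tf : ∀ g : AlgebraicClosure k ≃ₐ[k] AlgebraicClosure k,
      MvPolynomial.map g.toAlgHom.toRingHom f ∈ Tf :=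
    fun g => (Set.Finite.mem_toFinset _).mpr ⟨g, rfl⟩
  have hfTf : f ∈ Tf := by
    have h1 : MvPolynomial.map ((1 : AlgebraicClosure k ≃ₐ[k]
        AlgebraicClosure k)).toAlgHom.toRingHom f = f := by
      have : ((1 : AlgebraicClosure k ≃ₐ[k] AlgebraicClosure k)).toAlgHom.toRingHom
          = RingHom.id (AlgebraicClosure k) := RingHom.ext fun y => rfl
      rw [this, MvPolynomial.map_id]
    exact h1 ▸ hmem_Tf 1
  have hfix : ∀ g : AlgebraicClosure k ≃ₐ[k] AlgebraicClosure k,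
      MvPolynomial.map g.toAlgHom.toRingHom NormF = NormF := by
    intro g
    have hinj : Function.Injective ⇑(MvPolynomial.map (σ := Fin 2)
        (g.toAlgHom.toRingHom : AlgebraicClosure k →+* AlgebraicClosure k)) :=
      MvPolynomial.map_injective _ g.injective
    rw [hNormF, map_prod]
    have himg : Tf.image (fun F => MvPolynomial.map g.toAlgHom.toRingHom F) = Tf := by
      apply Finset.eq_of_subset_of_card_le
      · intro F hF
        rw [Finset.mem_image] at hF
        obtain ⟨F', hF', rfl⟩ := hF
        rw [Set.Finite.mem_toFinset] at hF'
        obtain ⟨g', rfl⟩ := hF'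
        rw [MvPolynomial.map_map]
        have : (g.toAlgHom.toRingHom).comp (g'.toAlgHom.toRingHom)
            = ((g * g' : AlgebraicClosure k ≃ₐ[k] AlgebraicClosure k)).toAlgHom.toRingHom :=
          RingHom.ext fun y => rfl
        rw [this]
        exact hmem_Tf _
      · rw [Finset.card_image_of_injective _ hinj]
    calc ∏ F ∈ Tf, MvPolynomial.map g.toAlgHom.toRingHom F
        = ∏ F ∈ Tf.image (fun F => MvPolynomial.map g.toAlgHom.toRingHom F), F := by
          rw [Finset.prod_image]
          intro a ha b hb hab
          exact hinj hab
      _ = NormF := by rw [himg]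
  obtain ⟨Pk, hPk⟩ := exists_map_emb hfix
  have hvanish : ∀ x ∈ Δ, aeval x Pk = 0 := by
    intro x hx
    rw [aeval_def, ← eval_map]
    show eval x (MvPolynomial.map (emb k) Pk) = 0
    rw [hPk, hNormF, map_prod]
    apply Finset.prod_eq_zero hfTf
    exact hfJ x hx
  have h0 : aeval q Pk = 0 := hq Pk hvanish
  rw [aeval_def, ← eval_map] at h0
  have h0' : eval q NormF = 0 := by rw [← hPk]; exact h0
  rw [hNormF, map_prod] at h0'
  obtain ⟨F, hFTf, hF0⟩ := Finset.prod_eq_zero_iff.mp h0'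
  rw [Set.Finite.mem_toFinset] at hFTf
  obtain ⟨g, rfl⟩ := hFTf
  -- eval q (map g f) = g (eval (galAct g⁻¹ q) f) ≠ 0
  have hkey : eval q (MvPolynomial.map g.toAlgHom.toRingHom f)
      = g (eval (galAct g⁻¹ q) f) := by
    have h1 : galAct g (galAct g⁻¹ q) = q := by
      rw [← galAct_mul, mul_inv_cancel, galAct_one]
    have h2 := eval_gmap g (galAct g⁻¹ q) (MvPolynomial.map g.toAlgHom.toRingHom f)
    rw [h1] at h2
    rw [h2, MvPolynomial.map_map]
    have h3 : (g.symm.toAlgHom.toRingHom).comp (g.toAlgHom.toRingHom)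
        = RingHom.id (AlgebraicClosure k) := RingHom.ext fun y => g.symm_apply_apply y
    rw [h3, MvPolynomial.map_id]
  rw [hkey] at hF0
  exact hfne g⁻¹ ((map_eq_zero_iff g g.injective).mp hF0)

end Stmt15Aux6

/-- If the Zariski closure `Δ̄` of `O_φ(p)` is infinite and not the
whole plane, then its irreducible components can be labeled `C_0, …, C_{ℓ−1}` with
`p ∈ C_0`, `φ(C_i) = C_{i+1}` cyclically, and `C_i` the Zariski closure of
`O_{φ^ℓ}(φ^i(p))`; moreover the number of irreducible components of `Δ̂` is a
(positive) multiple of `ℓ` and each of them is a Galois translate of some `C_i`. -/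
theorem stmt_15 (k : Type*) [Field k] [PerfectField k] (φ : PlaneAut k) (p : Pt k)
    (h1 : (zclos (orbAut φ p)).Infinite) (h2 : zclos (orbAut φ p) ≠ Set.univ) :
    ∃ (ℓ : ℕ) (C : ℕ → Set (Pt k)), 0 < ℓ ∧
      (∀ D : Set (Pt k), IsIrredComponentOf D (zclos (orbAut φ p)) ↔ ∃ i < ℓ, D = C i) ∧
      (∀ i < ℓ, ∀ j < ℓ, C i = C j → i = j) ∧
      p ∈ C 0 ∧
      (∀ i : ℕ, i + 1 < ℓ → actp φ '' C i = C (i + 1)) ∧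
      actp φ '' C (ℓ - 1) = C 0 ∧
      (∀ i < ℓ, C i = zclos (orbAut (φ ^ ℓ) (actp (φ ^ i) p))) ∧
      (∃ m : ℕ, 0 < m ∧
        {D : Set (Pt k) | IsIrredComponentOf D (hatSet (orbAut φ p))}.ncard = m * ℓ) ∧
      (∀ D : Set (Pt k), IsIrredComponentOf D (hatSet (orbAut φ p)) →
        ∃ (g : AlgebraicClosure k ≃ₐ[k] AlgebraicClosure k) (i : ℕ), i < ℓ ∧
          D = galAct g '' C i) := by
  classical
  clear h1 h2
  set O := orbAut φ p with hO
  set S := zclos O with hS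
  have hScl : IsZClosed S := isZClosed_zclos O
  have hpO : p ∈ O := ⟨0, by rw [zpow_zero, actp_one]⟩
  have hpS : p ∈ S := subset_zclos O hpO
  have hOfix : actp φ '' O = O := actp_image_orbAut φ p
  have hSfix : actp φ '' S = S := by rw [hS, actp_image_zclos, hOfix]
  obtain ⟨C₀, hC₀comp, hpC₀⟩ := exists_component_mem hScl hpS
  set C : ℕ → Set (Pt k) := fun i => actp (φ ^ i) '' C₀ with hC
  have hC0 : C 0 = C₀ := by
    rw [hC]
    dsimp only
    rw [pow_zero, show actp (1 : PlaneAut k) = id from funext actp_one]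
    exact Set.image_id _
  have hpC : p ∈ C 0 := by rw [hC0]; exact hpC₀
  have hadd : ∀ a b : ℕ, C (a + b) = actp (φ ^ a) '' C b := by
    intro a b
    rw [hC]
    dsimp only
    rw [pow_add]
    rw [show actp (φ ^ a * φ ^ b) = actp (φ ^ a) ∘ actp (φ ^ b) from
      funext fun q => actp_mul _ _ _, Set.image_comp]
  have hSfix' : ∀ i : ℕ, actp (φ ^ i) '' S = S := fun i => actp_zpow_image_nat hSfix i
  have hCcomp : ∀ i : ℕ, IsIrredComponentOf (C i) S := by
    intro i
    exact hC₀comp.image (actpE (φ ^ i))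
      (fun Z hZ => actp_preimage_closed (φ ^ i) hZ)
      (fun Z hZ => actp_preimage_closed (φ ^ i)⁻¹ hZ) (hSfix' i)
  have hCcl : ∀ i, IsZClosed (C i) := fun i => (hCcomp i).closed hScl
  have hCsubS : ∀ i, C i ⊆ S := fun i => (hCcomp i).2.1
  have hsucc : ∀ i : ℕ, actp φ '' C i = C (i + 1) := by
    intro i
    have := hadd 1 i
    rw [show (1 : ℕ) + i = i + 1 by omega] at this
    rw [this, pow_one]
  have himginj : ∀ (ψ : PlaneAut k) (A B : Set (Pt k)), actp ψ '' A = actp ψ '' B → A = B :=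
    fun ψ A B h => Set.image_injective.mpr (actp_injective ψ) h
  have hfinC : {D : Set (Pt k) | IsIrredComponentOf D S}.Finite := components_finite hScl
  have key_period : ∀ i j : ℕ, i < j → C i = C j → C (j - i) = C 0 := by
    intro i j hij heq
    have h1 : C j = actp (φ ^ i) '' C (j - i) := by
      have h := hadd i (j - i)
      rw [show i + (j - i) = j by omega] at h
      exact h
    have h2 : C i = actp (φ ^ i) '' C 0 := by
      have h := hadd i 0
      rw [Nat.add_zero] at h
      exact h
    have h3 : actp (φ ^ i) '' C 0 = actp (φ ^ i) '' C (j - i) := by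
      rw [← h2, ← h1]
      exact heq
    exact (himginj _ _ _ h3).symm
  have hex : ∃ n : ℕ, 0 < n ∧ C n = C 0 := by
    have hfinsub : Finite ↥{D : Set (Pt k) | IsIrredComponentOf D S} := hfinC.to_subtype
    obtain ⟨i, j, hne, heq⟩ := Finite.exists_ne_map_eq_of_infinite
      (fun i : ℕ => (⟨C i, hCcomp i⟩ : {D : Set (Pt k) | IsIrredComponentOf D S}))
    have heq' : C i = C j := congrArg Subtype.val heq
    rcases Nat.lt_or_ge i j with h | h
    · exact ⟨j - i, by omega, key_period i j h heq'⟩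
    · have hji : j < i := by omega
      exact ⟨i - j, by omega, key_period j i hji heq'.symm⟩
  set ℓ := Nat.find hex with hℓdef
  obtain ⟨hℓpos, hCl⟩ := Nat.find_spec hex
  have hmin : ∀ m, 0 < m → m < ℓ → C m ≠ C 0 := fun m hm hmℓ h => Nat.find_min hex hmℓ ⟨hm, h⟩
  have hper : ∀ i, C (i + ℓ) = C i := by
    intro i
    have h := hadd i ℓ
    rw [hCl] at h
    have h2 := hadd i 0
    rw [Nat.add_zero] at h2
    rw [h, ← h2]
  have hmod : ∀ n, C n = C (n % ℓ) := by
    intro n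
    induction n using Nat.strong_induction_on with
    | _ n ih =>
      by_cases h : n < ℓ
      · rw [Nat.mod_eq_of_lt h]
      · push_neg at h
        have h1 : n - ℓ + ℓ = n := Nat.sub_add_cancel h
        have h2 : C n = C (n - ℓ) := by
          conv_lhs => rw [← h1]
          exact hper _
        rw [h2, ih _ (by omega)]
        congr 1
        conv_rhs => rw [← h1]
        rw [Nat.add_mod_right]
  have hdist : ∀ i < ℓ, ∀ j < ℓ, C i = C j → i = j := by
    intro i hi j hj hij
    rcases lt_trichotomy i j with h | h | h
    · exact absurd (key_period i j h hij) (hmin (j - i) (by omega) (by omega))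
    · exact h
    · exact absurd (key_period j i h hij.symm) (hmin (i - j) (by omega) (by omega))
  have hCfixℓ : ∀ i, actp (φ ^ ℓ) '' C i = C i := by
    intro i
    have h := hadd ℓ i
    rw [show ℓ + i = i + ℓ by omega, hper] at h
    exact h.symm
  have hCfixz : ∀ i, ∀ m : ℤ, actp ((φ ^ ℓ) ^ m) '' C i = C i :=
    fun i m => actp_zpow_image (hCfixℓ i) m
  have hbase : ∀ r : ℕ, actp (φ ^ r) p ∈ C r := fun r => ⟨p, hpC₀, rfl⟩
  have hdecomp : ∀ n : ℤ, φ ^ n = (φ ^ ℓ) ^ (n / (ℓ : ℤ)) * φ ^ ((n % (ℓ : ℤ)).toNat) := by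
    intro n
    have hr : (0 : ℤ) ≤ n % (ℓ : ℤ) :=
      Int.emod_nonneg n (by exact_mod_cast hℓpos.ne')
    rw [show ((φ : PlaneAut k) ^ ℓ) = φ ^ (ℓ : ℤ) from (zpow_natCast φ ℓ).symm,
      ← zpow_mul, ← zpow_natCast φ ((n % (ℓ : ℤ)).toNat), ← zpow_add]
    congr 1
    rw [Int.toNat_of_nonneg hr]
    exact (Int.mul_ediv_add_emod n ℓ).symm
  have horbmem : ∀ n : ℤ, actp (φ ^ n) p ∈ C ((n % (ℓ : ℤ)).toNat) := by
    intro n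
    rw [hdecomp n, actp_mul]
    exact mem_of_image_eq (hCfixz _ (n / (ℓ : ℤ))) (hbase _)
  have hltr : ∀ n : ℤ, ((n % (ℓ : ℤ)).toNat) < ℓ := by
    intro n
    have h1 : n % (ℓ : ℤ) < (ℓ : ℤ) := Int.emod_lt_of_pos n (by exact_mod_cast hℓpos)
    have h2 : (0 : ℤ) ≤ n % (ℓ : ℤ) := Int.emod_nonneg n (by exact_mod_cast hℓpos.ne')
    omega
  have hOcov : O ⊆ ⋃ i ∈ Finset.range ℓ, C i := by
    rintro x ⟨n, rfl⟩
    exact Set.mem_biUnion (Finset.mem_range.mpr (hltr n)) (horbmem n)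
  have hScov : S ⊆ ⋃ i ∈ Finset.range ℓ, C i :=
    zclos_min hOcov (isZClosed_biUnion _ _ (fun i _ => hCcl i))
  have hSeq : S = ⋃ i ∈ Finset.range ℓ, C i := by
    apply subset_antisymm hScov
    intro x hx
    simp only [Set.mem_iUnion] at hx
    obtain ⟨i, _, h⟩ := hx
    exact hCsubS i h
  have hcomp_iff : ∀ D : Set (Pt k), IsIrredComponentOf D S ↔ ∃ i < ℓ, D = C i := by
    intro D
    constructor
    · intro hD
      obtain ⟨i, hi, hDC⟩ := hD.1.subset_of_cover (Finset.range ℓ) C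
        (fun i _ => hCcl i) (hD.2.1.trans hScov)
      exact ⟨i, Finset.mem_range.mp hi, hD.2.2 _ (hCcomp i).1 (hCsubS i) hDC⟩
    · rintro ⟨i, hi, rfl⟩
      exact hCcomp i
  have hsub_orb : ∀ i < ℓ, C i = zclos (orbAut (φ ^ ℓ) (actp (φ ^ i) p)) := by
    intro i hi
    have hZsubC : ∀ j, j < ℓ → zclos (orbAut (φ ^ ℓ) (actp (φ ^ j) p)) ⊆ C j := by
      intro j hj
      apply zclos_min _ (hCcl j)
      rintro x ⟨m, rfl⟩
      exact mem_of_image_eq (hCfixz j m) (hbase j)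
    have hOcov2 : O ⊆ ⋃ j ∈ Finset.range ℓ, zclos (orbAut (φ ^ ℓ) (actp (φ ^ j) p)) := by
      rintro x ⟨n, rfl⟩
      refine Set.mem_biUnion (Finset.mem_range.mpr (hltr n)) ?_
      apply subset_zclos
      exact ⟨n / (ℓ : ℤ), by rw [← actp_mul, ← hdecomp]⟩
    have hScov2 : S ⊆ ⋃ j ∈ Finset.range ℓ, zclos (orbAut (φ ^ ℓ) (actp (φ ^ j) p)) :=
      zclos_min hOcov2 (isZClosed_biUnion _ _ fun j _ => isZClosed_zclos _)
    obtain ⟨j, hj, hCZ⟩ := (hCcomp i).1.subset_of_cover (Finset.range ℓ)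
      (fun j => zclos (orbAut (φ ^ ℓ) (actp (φ ^ j) p)))
      (fun j _ => isZClosed_zclos _) ((hCsubS i).trans hScov2)
    rw [Finset.mem_range] at hj
    have hij : i = j := by
      apply hdist i hi j hj
      exact (hCcomp i).2.2 _ (hCcomp j).1 (hCsubS j) (hCZ.trans (hZsubC j hj))
    subst hij
    exact subset_antisymm hCZ (hZsubC i hi)
  -- hat part
  have hhatcl : IsZClosed (hatSet O) := hatSet_isZClosed O
  have hShat : S ⊆ hatSet O := zclos_subset_hatSet O
  have hphat : p ∈ hatSet O := hShat hpS
  have hhatfix : actp φ '' hatSet O = hatSet O := actp_image_hatSet φ p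
  have hgalfix : ∀ g : AlgebraicClosure k ≃ₐ[k] AlgebraicClosure k,
      galAct g '' hatSet O = hatSet O := fun g => galAct_image_hatSet g O
  have h𝒜fin : (⋃ i ∈ Finset.range ℓ, Set.range fun g : AlgebraicClosure k ≃ₐ[k]
      AlgebraicClosure k => galAct g '' C i).Finite :=
    Set.Finite.biUnion (Finset.range ℓ).finite_toSet (fun i _ => finite_galImages (hCcl i))
  have h𝒜mem : ∀ A ∈ (⋃ i ∈ Finset.range ℓ, Set.range fun g : AlgebraicClosure k ≃ₐ[k]
      AlgebraicClosure k => galAct g '' C i),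
      ∃ (g : AlgebraicClosure k ≃ₐ[k] AlgebraicClosure k) (i : ℕ), i < ℓ ∧
        A = galAct g '' C i := by
    intro A hA
    simp only [Set.mem_iUnion, Set.mem_range] at hA
    obtain ⟨i, hi, g, rfl⟩ := hA
    exact ⟨g, i, Finset.mem_range.mp hi, rfl⟩
  have hhatcov : hatSet O ⊆ ⋃ A ∈ h𝒜fin.toFinset, A := by
    intro x hx
    have hx2 := hatSet_subset_iUnion O hx
    simp only [Set.mem_iUnion] at hx2
    obtain ⟨g, hxg⟩ := hx2
    have himg : galAct g '' zclos O = ⋃ i ∈ Finset.range ℓ, galAct g '' C i := by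
      rw [show zclos O = S from rfl, hSeq, Set.image_iUnion₂]
    rw [himg] at hxg
    simp only [Set.mem_iUnion] at hxg
    obtain ⟨i, hi, hxi⟩ := hxg
    exact Set.mem_biUnion ((Set.Finite.mem_toFinset _).mpr (Set.mem_biUnion hi ⟨g, rfl⟩)) hxi
  have htranslate : ∀ D : Set (Pt k), IsIrredComponentOf D (hatSet O) →
      ∃ (g : AlgebraicClosure k ≃ₐ[k] AlgebraicClosure k) (i : ℕ), i < ℓ ∧
        D = galAct g '' C i := by
    intro D hD
    obtain ⟨A, hA, hDA⟩ := hD.1.subset_of_cover h𝒜fin.toFinset id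
      (by
        intro A hA
        obtain ⟨g, i, hi, rfl⟩ := h𝒜mem A ((Set.Finite.mem_toFinset _).mp hA)
        exact galAct_image_closed g (hCcl i))
      (hD.2.1.trans hhatcov)
    obtain ⟨g, i, hi, rfl⟩ := h𝒜mem A ((Set.Finite.mem_toFinset _).mp hA)
    refine ⟨g, i, hi, ?_⟩
    have hAirr : IsZIrreducible (galAct g '' C i) :=
      (hCcomp i).1.image (galE g) (fun Z hZ => galAct_preimage_closed g hZ)
    have hAsub : galAct g '' C i ⊆ hatSet O := by
      rw [← hgalfix g]
      exact Set.image_mono ((hCsubS i).trans hShat)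
    exact hD.2.2 _ hAirr hAsub hDA
  have h𝒟fin : {D : Set (Pt k) | IsIrredComponentOf D (hatSet O)}.Finite :=
    components_finite hhatcl
  have h𝒟ne : {D : Set (Pt k) | IsIrredComponentOf D (hatSet O)}.Nonempty := by
    obtain ⟨D, hD, _⟩ := exists_component_mem hhatcl hphat
    exact ⟨D, hD⟩
  set π : Set (Pt k) → Set (Pt k) := fun A => actp φ '' A with hπ
  have hπmaps : ∀ D ∈ {D : Set (Pt k) | IsIrredComponentOf D (hatSet O)},
      π D ∈ {D : Set (Pt k) | IsIrredComponentOf D (hatSet O)} := by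
    intro D hD
    exact hD.image (actpE φ) (fun Z hZ => actp_preimage_closed φ hZ)
      (fun Z hZ => actp_preimage_closed φ⁻¹ hZ) hhatfix
  have hgC : ∀ (g : AlgebraicClosure k ≃ₐ[k] AlgebraicClosure k) (i : ℕ) (j : ℕ),
      π^[j] (galAct g '' C i) = galAct g '' C (j + i) := by
    intro g i j
    rw [image_iterate_actp φ j, actp_image_galAct_image, ← hadd j i]
  have hπper : ∀ D ∈ {D : Set (Pt k) | IsIrredComponentOf D (hatSet O)}, π^[ℓ] D = D := by
    intro D hD
    obtain ⟨g, i, hi, rfl⟩ := htranslate D hD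
    rw [hgC g i ℓ, show ℓ + i = i + ℓ by omega, hper]
  have hπinj : ∀ D ∈ {D : Set (Pt k) | IsIrredComponentOf D (hatSet O)},
      ∀ j₁, j₁ < ℓ → ∀ j₂, j₂ < ℓ → π^[j₁] D = π^[j₂] D → j₁ = j₂ := by
    intro D hD j₁ hj₁ j₂ hj₂ heq
    obtain ⟨g, i, hi, rfl⟩ := htranslate D hD
    rw [hgC g i j₁, hgC g i j₂] at heq
    have hCeq : C (j₁ + i) = C (j₂ + i) :=
      Set.image_injective.mpr (galE g).injective heq
    rw [hmod (j₁ + i), hmod (j₂ + i)] at hCeq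
    have hmodeq : (j₁ + i) % ℓ = (j₂ + i) % ℓ :=
      hdist _ (Nat.mod_lt _ hℓpos) _ (Nat.mod_lt _ hℓpos) hCeq
    have := (Nat.ModEq.add_right_cancel' i hmodeq)
    rwa [Nat.ModEq, Nat.mod_eq_of_lt hj₁, Nat.mod_eq_of_lt hj₂] at this
  have hdvd : ℓ ∣ {D : Set (Pt k) | IsIrredComponentOf D (hatSet O)}.ncard :=
    ncard_multiple ℓ hℓpos π _ _ rfl h𝒟fin hπmaps hπper hπinj
  have hncard_pos : 0 < {D : Set (Pt k) | IsIrredComponentOf D (hatSet O)}.ncard :=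
    (Set.ncard_pos h𝒟fin).mpr h𝒟ne
  refine ⟨ℓ, C, hℓpos, hcomp_iff, hdist, hpC, fun i _ => hsucc i, ?_, hsub_orb,
    ⟨{D : Set (Pt k) | IsIrredComponentOf D (hatSet O)}.ncard / ℓ, ?_, ?_⟩, htranslate⟩
  · rw [hsucc (ℓ - 1), show ℓ - 1 + 1 = ℓ by omega, hCl]
  · exact Nat.div_pos (Nat.le_of_dvd hncard_pos hdvd) hℓpos
  · exact (Nat.div_mul_cancel hdvd).symm
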